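/- Let μ and μ' be probability measures on K with μ ≪ μ' and α = ‖dμ/dμ'‖_{L²(μ')} < ∞. Let P be a Markov kernel on K, reversible with respect to μ', such that for some Δ ∈ (0,1) and every f ∈ L²(μ') with ∫ f dμ' = 0 one has ‖Pf‖_{L²(μ')} ≤ (1 − Δ)·‖f‖_{L²(μ')}. Let ε > 0 and let τ be a natural number with τ ≥ (1/Δ)·log(α/ε). Then for every probability measure σ on K, the total variation distance satisfies d_TV(σP^τ, μ') ≤ d_TV(σ, μ) + ε. -/

import Mathlib

open MeasureTheory ProbabilityTheory
open scoped ENNReal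

/-- The action of a Markov kernel on a (probability) measure: `σP (B) = ∫ P_x(B) dσ(x)`. -/
noncomputable def kernelApply {α : Type*} [MeasurableSpace α]
    (P : Kernel α α) (σ : Measure α) : Measure α :=
  σ.bind (fun x => P x)

/-- The `τ`-fold iterate `σ P^τ` of the action of a Markov kernel on a measure. -/
noncomputable def kernelIter {α : Type*} [MeasurableSpace α]
    (P : Kernel α α) (τ : ℕ) (σ : Measure α) : Measure α :=
  (kernelApply P)^[τ] σ

/-- Total variation distance between two measures:
the supremum of `|μ B − ν B|` over measurable sets `B`. -/
noncomputable def tvDist {α : Type*} [MeasurableSpace α] (μ ν : Measure α) : ℝ :=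
  sSup { r : ℝ | ∃ B : Set α, MeasurableSet B ∧ r = |(μ B).toReal - (ν B).toReal| }

variable {X : Type*} [MeasurableSpace X]

lemma tvDist_set_nonempty (μ ν : Measure X) :
    { r : ℝ | ∃ B : Set X, MeasurableSet B ∧ r = |(μ B).toReal - (ν B).toReal| }.Nonempty :=
  ⟨|(μ ∅).toReal - (ν ∅).toReal|, ∅, MeasurableSet.empty, rfl⟩

lemma tvDist_bddAbove (μ ν : Measure X) [IsFiniteMeasure μ] [IsFiniteMeasure ν] :
    BddAbove { r : ℝ | ∃ B : Set X, MeasurableSet B ∧ r = |(μ B).toReal - (ν B).toReal| } := by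
  refine ⟨(μ Set.univ).toReal + (ν Set.univ).toReal, ?_⟩
  rintro r ⟨B, hB, rfl⟩
  have h1 : (μ B).toReal ≤ (μ Set.univ).toReal :=
    ENNReal.toReal_mono (measure_ne_top _ _) (measure_mono (Set.subset_univ _))
  have h2 : (ν B).toReal ≤ (ν Set.univ).toReal :=
    ENNReal.toReal_mono (measure_ne_top _ _) (measure_mono (Set.subset_univ _))
  have h3 : 0 ≤ (μ B).toReal := ENNReal.toReal_nonneg
  have h4 : 0 ≤ (ν B).toReal := ENNReal.toReal_nonneg
  rw [abs_sub_le_iff]; constructor <;> nlinarith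

lemma abs_measure_le_tvDist {μ ν : Measure X} [IsFiniteMeasure μ] [IsFiniteMeasure ν]
    {B : Set X} (hB : MeasurableSet B) :
    |(μ B).toReal - (ν B).toReal| ≤ tvDist μ ν :=
  le_csSup (tvDist_bddAbove μ ν) ⟨B, hB, rfl⟩

lemma tvDist_le {μ ν : Measure X} {c : ℝ}
    (h : ∀ B : Set X, MeasurableSet B → |(μ B).toReal - (ν B).toReal| ≤ c) :
    tvDist μ ν ≤ c := by
  refine csSup_le (tvDist_set_nonempty μ ν) ?_
  rintro r ⟨B, hB, rfl⟩; exact h B hB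

lemma tvDist_nonneg (μ ν : Measure X) [IsFiniteMeasure μ] [IsFiniteMeasure ν] :
    0 ≤ tvDist μ ν := by
  have := abs_measure_le_tvDist (μ := μ) (ν := ν) MeasurableSet.empty
  exact le_trans (abs_nonneg _) this

lemma tvDist_triangle (a b c : Measure X) [IsFiniteMeasure a] [IsFiniteMeasure b]
    [IsFiniteMeasure c] : tvDist a c ≤ tvDist a b + tvDist b c := by
  refine tvDist_le fun B hB => ?_
  calc |(a B).toReal - (c B).toReal|
      ≤ |(a B).toReal - (b B).toReal| + |(b B).toReal - (c B).toReal| := abs_sub_le _ _ _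
    _ ≤ tvDist a b + tvDist b c :=
        add_le_add (abs_measure_le_tvDist hB) (abs_measure_le_tvDist hB)


lemma kernelIter_succ {α : Type*} [MeasurableSpace α] (P : Kernel α α) (k : ℕ) (σ : Measure α) :
    kernelIter P (k+1) σ = kernelApply P (kernelIter P k σ) := by
  simp [kernelIter, Function.iterate_succ_apply']


variable {X : Type*} [MeasurableSpace X]

/-- integrals of `[0,1]`-valued functions differ by at most the TV distance -/
lemma lintegral_sub_le_tvDist (σ μ : Measure X) [IsProbabilityMeasure σ]
    [IsProbabilityMeasure μ] {h : X → ℝ≥0∞} (hm : Measurable h) (h1 : ∀ x, h x ≤ 1) :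
    (∫⁻ x, h x ∂σ).toReal - (∫⁻ x, h x ∂μ).toReal ≤ tvDist σ μ := by
  set ρ : Measure X := σ + μ with hρ
  have hσρ : σ ≪ ρ := Measure.absolutelyContinuous_of_le (Measure.le_add_right le_rfl)
  have hμρ : μ ≪ ρ := Measure.absolutelyContinuous_of_le (Measure.le_add_left le_rfl)
  set f := σ.rnDeriv ρ
  set g := μ.rnDeriv ρ
  have hf : Measurable f := Measure.measurable_rnDeriv _ _
  have hg : Measurable g := Measure.measurable_rnDeriv _ _
  set A : Set X := {x | g x ≤ f x} with hA
  have hAm : MeasurableSet A := measurableSet_le hg hf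
  -- rewrite lintegrals via densities
  have hσd : ∫⁻ x, h x ∂σ = ∫⁻ x, f x * h x ∂ρ := by
    conv_lhs => rw [← Measure.withDensity_rnDeriv_eq σ ρ hσρ]
    rw [lintegral_withDensity_eq_lintegral_mul ρ hf hm]; rfl
  have hμd : ∫⁻ x, h x ∂μ = ∫⁻ x, g x * h x ∂ρ := by
    conv_lhs => rw [← Measure.withDensity_rnDeriv_eq μ ρ hμρ]
    rw [lintegral_withDensity_eq_lintegral_mul ρ hg hm]; rfl
  -- split the σ-integral over A and Aᶜ
  have hsplit : ∫⁻ x, f x * h x ∂ρ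
      = ∫⁻ x in A, f x * h x ∂ρ + ∫⁻ x in Aᶜ, f x * h x ∂ρ :=
    (lintegral_add_compl _ hAm).symm
  have hAc : ∫⁻ x in Aᶜ, f x * h x ∂ρ ≤ ∫⁻ x in Aᶜ, g x * h x ∂ρ := by
    refine setLIntegral_mono (hg.mul hm) fun x hx => ?_
    exact mul_le_mul_left (le_of_lt (lt_of_not_ge (by simpa [A] using hx))) _
  have hAg : ∫⁻ x in A, f x * h x ∂ρ
      ≤ ∫⁻ x in A, g x * h x ∂ρ + (σ A - μ A) := by
    have h1' : ∫⁻ x in A, f x * h x ∂ρ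
        = ∫⁻ x in A, g x * h x ∂ρ + ∫⁻ x in A, (f x - g x) * h x ∂ρ := by
      rw [← lintegral_add_left (f := fun x => g x * h x) (hg.mul hm)]
      refine setLIntegral_congr_fun hAm (fun x hx => ?_)
      rw [← add_mul, add_tsub_cancel_of_le (show g x ≤ f x from hx)]
    have h2' : ∫⁻ x in A, (f x - g x) * h x ∂ρ ≤ ∫⁻ x in A, (f x - g x) ∂ρ := by
      refine setLIntegral_mono ((hf.sub hg)) fun x _ => ?_
      calc (f x - g x) * h x ≤ (f x - g x) * 1 := mul_le_mul_right (h1 x) _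
        _ = f x - g x := mul_one _
    have h3' : ∫⁻ x in A, (f x - g x) ∂ρ ≤ σ A - μ A := by
      have hfA : ∫⁻ x in A, f x ∂ρ = σ A := Measure.setLIntegral_rnDeriv hσρ A
      have hgA : ∫⁻ x in A, g x ∂ρ = μ A := Measure.setLIntegral_rnDeriv hμρ A
      have hsum : ∫⁻ x in A, (f x - g x) ∂ρ + ∫⁻ x in A, g x ∂ρ = ∫⁻ x in A, f x ∂ρ := by
        rw [← lintegral_add_right _ hg]
        refine setLIntegral_congr_fun hAm (fun x hx => ?_)
        exact tsub_add_cancel_of_le (show g x ≤ f x from hx)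
      rw [hfA, hgA] at hsum
      exact le_of_eq (ENNReal.eq_sub_of_add_eq (measure_ne_top μ A) hsum)
    calc ∫⁻ x in A, f x * h x ∂ρ
        = ∫⁻ x in A, g x * h x ∂ρ + ∫⁻ x in A, (f x - g x) * h x ∂ρ := h1'
      _ ≤ ∫⁻ x in A, g x * h x ∂ρ + (σ A - μ A) :=
          add_le_add le_rfl (le_trans h2' h3')
  have hmain : ∫⁻ x, h x ∂σ ≤ ∫⁻ x, h x ∂μ + (σ A - μ A) := by
    rw [hσd, hμd, hsplit]
    calc ∫⁻ x in A, f x * h x ∂ρ + ∫⁻ x in Aᶜ, f x * h x ∂ρ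
        ≤ (∫⁻ x in A, g x * h x ∂ρ + (σ A - μ A)) + ∫⁻ x in Aᶜ, g x * h x ∂ρ :=
          add_le_add hAg hAc
      _ = (∫⁻ x in A, g x * h x ∂ρ + ∫⁻ x in Aᶜ, g x * h x ∂ρ) + (σ A - μ A) := by ring
      _ = ∫⁻ x, g x * h x ∂ρ + (σ A - μ A) := by rw [lintegral_add_compl _ hAm]
  -- move to reals
  have hμA_le : μ A ≤ σ A := by
    rw [← Measure.setLIntegral_rnDeriv hσρ A, ← Measure.setLIntegral_rnDeriv hμρ A]
    exact setLIntegral_mono hf fun x hx => hx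
  have hfin1 : ∫⁻ x, h x ∂σ ≠ ⊤ := by
    refine ne_top_of_le_ne_top ?_ (lintegral_mono h1)
    simp
  have hfin2 : ∫⁻ x, h x ∂μ ≠ ⊤ := by
    refine ne_top_of_le_ne_top ?_ (lintegral_mono h1)
    simp
  have hreal : (∫⁻ x, h x ∂σ).toReal ≤ (∫⁻ x, h x ∂μ).toReal + ((σ A).toReal - (μ A).toReal) := by
    have := ENNReal.toReal_mono (by
      refine ENNReal.add_ne_top.2 ⟨hfin2, ?_⟩
      exact ne_top_of_le_ne_top (measure_ne_top σ A) tsub_le_self) hmain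
    rw [ENNReal.toReal_add hfin2 (ne_top_of_le_ne_top (measure_ne_top σ A) tsub_le_self),
      ENNReal.toReal_sub_of_le hμA_le (measure_ne_top σ A)] at this
    linarith
  have : (σ A).toReal - (μ A).toReal ≤ tvDist σ μ :=
    le_trans (le_abs_self _) (abs_measure_le_tvDist hAm)
  linarith

instance kernelApply_isProbabilityMeasure (P : Kernel X X) [IsMarkovKernel P]
    (σ : Measure X) [IsProbabilityMeasure σ] : IsProbabilityMeasure (kernelApply P σ) := by
  constructor
  rw [kernelApply, Measure.bind_apply MeasurableSet.univ (Kernel.measurable P).aemeasurable]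
  simp

instance kernelIter_isProbabilityMeasure (P : Kernel X X) [IsMarkovKernel P]
    (τ : ℕ) (σ : Measure X) [IsProbabilityMeasure σ] :
    IsProbabilityMeasure (kernelIter P τ σ) := by
  induction τ with
  | zero => exact ‹_›
  | succ k ih =>
    rw [kernelIter_succ]
    have : IsProbabilityMeasure (kernelIter P k σ) := ih
    exact kernelApply_isProbabilityMeasure P _

lemma tvDist_symm' (μ ν : Measure X) : tvDist μ ν = tvDist ν μ := by
  unfold tvDist
  congr 1
  ext r
  constructor <;> rintro ⟨B, hB, rfl⟩ <;> exact ⟨B, hB, (abs_sub_comm _ _)⟩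

lemma tvDist_kernelApply_le (P : Kernel X X) [IsMarkovKernel P]
    (a b : Measure X) [IsProbabilityMeasure a] [IsProbabilityMeasure b] :
    tvDist (kernelApply P a) (kernelApply P b) ≤ tvDist a b := by
  refine tvDist_le fun B hB => ?_
  rw [kernelApply, kernelApply, Measure.bind_apply hB (Kernel.measurable P).aemeasurable,
    Measure.bind_apply hB (Kernel.measurable P).aemeasurable]
  have hmeas : Measurable fun x => (P x) B := Kernel.measurable_coe P hB
  have hle : ∀ x, (P x) B ≤ 1 := fun x => prob_le_one
  rw [abs_sub_le_iff]
  exact ⟨lintegral_sub_le_tvDist a b hmeas hle,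
    by simpa [tvDist_symm'] using lintegral_sub_le_tvDist b a hmeas hle⟩

lemma tvDist_kernelIter_le (P : Kernel X X) [IsMarkovKernel P] (τ : ℕ)
    (a b : Measure X) [IsProbabilityMeasure a] [IsProbabilityMeasure b] :
    tvDist (kernelIter P τ a) (kernelIter P τ b) ≤ tvDist a b := by
  induction τ with
  | zero => exact le_rfl
  | succ k ih =>
    rw [kernelIter_succ, kernelIter_succ]
    have h1 : IsProbabilityMeasure (kernelIter P k a) := inferInstance
    have h2 : IsProbabilityMeasure (kernelIter P k b) := inferInstance
    exact le_trans (tvDist_kernelApply_le P _ _) ih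


lemma rev_lintegral {P : Kernel X X} [IsMarkovKernel P] {μ' : Measure X}
    [IsProbabilityMeasure μ'] (hrev : (μ' ⊗ₘ P).map Prod.swap = μ' ⊗ₘ P)
    {f g : X → ℝ≥0∞} (hf : Measurable f) (hg : Measurable g) :
    ∫⁻ x, f x * ∫⁻ y, g y ∂P x ∂μ' = ∫⁻ x, g x * ∫⁻ y, f y ∂P x ∂μ' := by
  have hF : Measurable fun p : X × X => f p.1 * g p.2 :=
    (hf.comp measurable_fst).mul (hg.comp measurable_snd)
  have h1 : ∫⁻ p : X × X, f p.1 * g p.2 ∂(μ' ⊗ₘ P) = ∫⁻ x, f x * ∫⁻ y, g y ∂P x ∂μ' := by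
    rw [Measure.lintegral_compProd hF]
    congr 1; ext x
    simp only []
    exact lintegral_const_mul _ hg
  have h2 : ∫⁻ p : X × X, f p.1 * g p.2 ∂(μ' ⊗ₘ P) = ∫⁻ x, g x * ∫⁻ y, f y ∂P x ∂μ' := by
    conv_lhs => rw [← hrev]
    rw [lintegral_map hF measurable_swap]
    have heq : ∀ p : X × X, f p.swap.1 * g p.swap.2 = f p.2 * g p.1 := fun p => rfl
    simp only [heq]
    rw [Measure.lintegral_compProd (f := fun p : X × X => f p.2 * g p.1) ((hf.comp measurable_snd).mul (hg.comp measurable_fst))]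
    congr 1; ext x
    simp only []
    simp_rw [fun b => mul_comm (f b) (g x)]
    exact lintegral_const_mul _ hf
  rw [← h1, h2]

lemma rev_invariant {P : Kernel X X} [IsMarkovKernel P] {μ' : Measure X}
    [IsProbabilityMeasure μ'] (hrev : (μ' ⊗ₘ P).map Prod.swap = μ' ⊗ₘ P)
    {g : X → ℝ≥0∞} (hg : Measurable g) :
    ∫⁻ x, ∫⁻ y, g y ∂P x ∂μ' = ∫⁻ x, g x ∂μ' := by
  have := rev_lintegral hrev (measurable_const : Measurable fun _ : X => (1 : ℝ≥0∞)) hg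
  simpa using this

lemma rev_density_step {P : Kernel X X} [IsMarkovKernel P] {μ' : Measure X}
    [IsProbabilityMeasure μ'] (hrev : (μ' ⊗ₘ P).map Prod.swap = μ' ⊗ₘ P)
    {g : X → ℝ≥0∞} (hg : Measurable g) {B : Set X} (hB : MeasurableSet B) :
    ∫⁻ x, g x * (P x) B ∂μ' = ∫⁻ x in B, ∫⁻ y, g y ∂P x ∂μ' := by
  have h := rev_lintegral hrev hg (measurable_one.indicator hB)
  have h1 : ∀ x : X, ∫⁻ y, B.indicator 1 y ∂P x = (P x) B := fun x => lintegral_indicator_one hB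
  simp_rw [h1] at h
  rw [h, ← lintegral_indicator hB]
  congr 1; ext x
  by_cases hx : x ∈ B <;> simp [hx]

noncomputable def densIter {α : Type*} [MeasurableSpace α] (P : Kernel α α)
    (g : α → ℝ≥0∞) : ℕ → α → ℝ≥0∞
  | 0 => g
  | (k+1) => fun x => ∫⁻ y, densIter P g k y ∂P x

lemma densIter_measurable (P : Kernel X X) [IsMarkovKernel P] {g : X → ℝ≥0∞}
    (hg : Measurable g) : ∀ k, Measurable (densIter P g k)
  | 0 => hg
  | (k+1) => Measurable.lintegral_kernel (densIter_measurable P hg k)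

/-- pointwise Jensen for the square under a probability measure -/
lemma lintegral_sq_jensen {ν : Measure X} [IsProbabilityMeasure ν] {g : X → ℝ≥0∞}
    (hg : Measurable g) : (∫⁻ y, g y ∂ν) ^ 2 ≤ ∫⁻ y, (g y) ^ 2 ∂ν := by
  have hconj : (2:ℝ).HolderConjugate 2 := by constructor <;> norm_num
  have := ENNReal.lintegral_mul_le_Lp_mul_Lq ν hconj hg.aemeasurable
    (aemeasurable_const : AEMeasurable (fun _ : X => (1:ℝ≥0∞)) ν)
  simp only [mul_one, ENNReal.one_rpow, lintegral_const, measure_univ, one_mul,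
    ENNReal.one_rpow] at this
  have h2 : ∫⁻ y, g y ∂ν ≤ (∫⁻ y, g y ^ (2:ℝ) ∂ν) ^ (1/2 : ℝ) := by
    simpa using this
  calc (∫⁻ y, g y ∂ν) ^ 2 ≤ ((∫⁻ y, g y ^ (2:ℝ) ∂ν) ^ (1/2 : ℝ)) ^ 2 := by
        exact pow_le_pow_left' h2 2
    _ = ∫⁻ y, g y ^ 2 ∂ν := by
        rw [← ENNReal.rpow_natCast (((∫⁻ y, g y ^ (2:ℝ) ∂ν) ^ (1/2:ℝ))) 2,
          ← ENNReal.rpow_mul]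
        have : ∀ y, g y ^ (2:ℝ) = g y ^ (2:ℕ) := fun y => ENNReal.rpow_natCast (g y) 2
        simp_rw [this]
        norm_num


lemma ennnorm_toReal_le {a : ℝ≥0∞} : (‖a.toReal‖₊ : ℝ≥0∞) ≤ a := by
  rw [← enorm_eq_nnnorm, Real.enorm_eq_ofReal ENNReal.toReal_nonneg]
  exact ENNReal.ofReal_toReal_le

lemma memL2_toReal {ν : Measure X} {f : X → ℝ≥0∞} (hf : Measurable f)
    (h2 : ∫⁻ x, (f x) ^ 2 ∂ν ≠ ⊤) : MemLp (fun x => (f x).toReal) 2 ν := by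
  refine ⟨hf.ennreal_toReal.aestronglyMeasurable, ?_⟩
  rw [eLpNorm_lt_top_iff_lintegral_rpow_enorm_lt_top (by norm_num) (by norm_num)]
  have hle : ∀ x, (‖(f x).toReal‖₊ : ℝ≥0∞) ^ ((2:ℝ≥0∞).toReal) ≤ (f x) ^ 2 := by
    intro x
    have h1 : (‖(f x).toReal‖₊ : ℝ≥0∞) ^ ((2:ℝ≥0∞).toReal) = (‖(f x).toReal‖₊ : ℝ≥0∞) ^ (2:ℕ) := by
      rw [show ((2:ℝ≥0∞).toReal) = ((2:ℕ):ℝ) by norm_num, ENNReal.rpow_natCast]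
    rw [h1]
    exact pow_le_pow_left' ennnorm_toReal_le 2
  exact lt_of_le_of_lt (lintegral_mono hle) (lt_top_iff_ne_top.2 h2)

lemma integral_toReal_sq {ν : Measure X} {f : X → ℝ≥0∞} (hf : Measurable f)
    (hfin : ∀ᵐ x ∂ν, f x < ⊤) :
    ∫ x, ((f x).toReal) ^ 2 ∂ν = (∫⁻ x, (f x) ^ 2 ∂ν).toReal := by
  rw [← integral_toReal ((hf.pow_const 2).aemeasurable)
    (hfin.mono fun x hx => ENNReal.pow_lt_top hx)]
  simp_rw [ENNReal.toReal_pow]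

lemma integral_abs_le_sqrt_sq {ν : Measure X} [IsProbabilityMeasure ν] {h : X → ℝ}
    (hm : MemLp h 2 ν) : ∫ x, |h x| ∂ν ≤ Real.sqrt (∫ x, (h x) ^ 2 ∂ν) := by
  have hint : Integrable h ν := hm.integrable one_le_two
  have hsq : Integrable (fun x => h x ^ 2) ν := hm.integrable_sq
  have hae : AEMeasurable (fun x => ENNReal.ofReal |h x|) ν :=
    (hint.abs.aestronglyMeasurable.aemeasurable).ennreal_ofReal
  have h1 : ∫ x, |h x| ∂ν = (∫⁻ x, ENNReal.ofReal |h x| ∂ν).toReal :=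
    integral_eq_lintegral_of_nonneg_ae (Filter.Eventually.of_forall fun x => abs_nonneg _)
      hint.abs.aestronglyMeasurable
  have h2 : ∫ x, h x ^ 2 ∂ν = (∫⁻ x, ENNReal.ofReal (h x ^ 2) ∂ν).toReal :=
    integral_eq_lintegral_of_nonneg_ae (Filter.Eventually.of_forall fun x => sq_nonneg _)
      hsq.aestronglyMeasurable
  have hconj : (2:ℝ).HolderConjugate 2 := by constructor <;> norm_num
  have hhold := ENNReal.lintegral_mul_le_Lp_mul_Lq ν hconj hae
    (aemeasurable_const : AEMeasurable (fun _ : X => (1:ℝ≥0∞)) ν)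
  simp only [Pi.mul_apply, mul_one, ENNReal.one_rpow, lintegral_const, measure_univ, one_mul] at hhold
  have hptw : ∀ x, ENNReal.ofReal |h x| ^ (2:ℝ) = ENNReal.ofReal (h x ^ 2) := by
    intro x
    rw [show (2:ℝ) = ((2:ℕ):ℝ) by norm_num, ENNReal.rpow_natCast,
      ← ENNReal.ofReal_pow (abs_nonneg _), sq_abs]
  simp_rw [hptw] at hhold
  have hfin : ∫⁻ x, ENNReal.ofReal (h x ^ 2) ∂ν ≠ ⊤ := hsq.lintegral_lt_top.ne
  calc ∫ x, |h x| ∂ν = (∫⁻ x, ENNReal.ofReal |h x| ∂ν).toReal := h1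
    _ ≤ ((∫⁻ x, ENNReal.ofReal (h x ^ 2) ∂ν) ^ (1/2:ℝ)).toReal := by
        refine ENNReal.toReal_mono ?_ hhold
        exact (ENNReal.rpow_lt_top_of_nonneg (by norm_num) hfin).ne
    _ = ((∫⁻ x, ENNReal.ofReal (h x ^ 2) ∂ν).toReal) ^ (1/2:ℝ) :=
        (ENNReal.toReal_rpow _ _).symm
    _ = Real.sqrt (∫ x, h x ^ 2 ∂ν) := by rw [h2, Real.sqrt_eq_rpow]


lemma tvDist_iter_mu_le {P : Kernel X X} [IsMarkovKernel P] {μ μ' : Measure X}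
    [IsProbabilityMeasure μ] [IsProbabilityMeasure μ'] (hacc : μ ≪ μ')
    (hα : MemLp (fun x => (μ.rnDeriv μ' x).toReal) 2 μ')
    (hrev : (μ' ⊗ₘ P).map Prod.swap = μ' ⊗ₘ P)
    {Δ : ℝ} (hΔ0 : 0 < Δ) (hΔ1 : Δ < 1)
    (hcontract : ∀ f : X → ℝ, MemLp f 2 μ' → (∫ x, f x ∂μ') = 0 →
      Real.sqrt (∫ x, (∫ y, f y ∂(P x)) ^ 2 ∂μ') ≤
        (1 - Δ) * Real.sqrt (∫ x, (f x) ^ 2 ∂μ'))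
    (τ : ℕ) :
    tvDist (kernelIter P τ μ) μ' ≤
      (1 - Δ) ^ τ * Real.sqrt (∫ x, ((μ.rnDeriv μ' x).toReal) ^ 2 ∂μ') := by
  set G0 : X → ℝ≥0∞ := μ.rnDeriv μ' with hG0
  have hG0m : Measurable G0 := Measure.measurable_rnDeriv μ μ'
  set G : ℕ → X → ℝ≥0∞ := densIter P G0 with hG
  have hGm : ∀ k, Measurable (G k) := densIter_measurable P hG0m
  set A : ℝ := Real.sqrt (∫ x, ((G0 x).toReal - 1) ^ 2 ∂μ') with hA
  -- the ℒ² norm of G0 is finite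
  have hG0fin : ∀ᵐ x ∂μ', G0 x < ⊤ := Measure.rnDeriv_lt_top μ μ'
  have hG0sq : ∫⁻ x, (G0 x) ^ 2 ∂μ' ≠ ⊤ := by
    have h1 := hα.eLpNorm_lt_top
    rw [eLpNorm_lt_top_iff_lintegral_rpow_enorm_lt_top (by norm_num) (by norm_num)] at h1
    have h2 : ∫⁻ x, (G0 x) ^ 2 ∂μ'
        = ∫⁻ x, (‖(G0 x).toReal‖₊ : ℝ≥0∞) ^ ((2:ℝ≥0∞).toReal) ∂μ' := by
      refine lintegral_congr_ae (hG0fin.mono fun x hx => ?_)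
      show G0 x ^ 2 = (‖(G0 x).toReal‖₊ : ℝ≥0∞) ^ ((2:ℝ≥0∞).toReal)
      rw [← enorm_eq_nnnorm, Real.enorm_eq_ofReal ENNReal.toReal_nonneg, ENNReal.ofReal_toReal hx.ne,
        show ((2:ℝ≥0∞).toReal) = ((2:ℕ):ℝ) by norm_num, ENNReal.rpow_natCast]
    rw [h2]; exact h1.ne
  -- the main induction
  have key : ∀ k, (kernelIter P k μ = μ'.withDensity (G k)) ∧
      (∫⁻ x, (G k x) ^ 2 ∂μ' ≠ ⊤) ∧ (∫⁻ x, G k x ∂μ' = 1) ∧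
      (Real.sqrt (∫ x, ((G k x).toReal - 1) ^ 2 ∂μ') ≤ (1 - Δ) ^ k * A) := by
    intro k
    induction k with
    | zero =>
      refine ⟨(Measure.withDensity_rnDeriv_eq μ μ' hacc).symm, hG0sq, ?_, by
        simp only [pow_zero, one_mul, hA]; exact le_of_eq rfl⟩
      rw [show ∫⁻ x, G 0 x ∂μ' = ∫⁻ x, G0 x ∂μ' from rfl, Measure.lintegral_rnDeriv hacc]
      simp
    | succ k ih =>
      obtain ⟨hEq, hFin, hMass, hContr⟩ := ih
      have hg : Measurable (G k) := hGm k
      have hGsucc : ∀ x, G (k+1) x = ∫⁻ y, G k y ∂P x := fun x => rfl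
      -- finiteness
      have hfin' : ∫⁻ x, (G (k+1) x) ^ 2 ∂μ' ≠ ⊤ := by
        have hle : ∫⁻ x, (G (k+1) x) ^ 2 ∂μ' ≤ ∫⁻ x, (G k x) ^ 2 ∂μ' := by
          calc ∫⁻ x, (G (k+1) x) ^ 2 ∂μ'
              ≤ ∫⁻ x, ∫⁻ y, (G k y) ^ 2 ∂P x ∂μ' := by
                refine lintegral_mono fun x => ?_
                rw [hGsucc x]
                exact lintegral_sq_jensen hg
            _ = ∫⁻ x, (G k x) ^ 2 ∂μ' := rev_invariant hrev (hg.pow_const 2)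
        exact ne_top_of_le_ne_top hFin hle
      -- measure identity
      have hEq' : kernelIter P (k+1) μ = μ'.withDensity (G (k+1)) := by
        rw [kernelIter_succ, hEq]
        ext B hB
        rw [kernelApply, Measure.bind_apply hB (Kernel.measurable P).aemeasurable,
          withDensity_apply _ hB]
        have h1 : ∫⁻ x, (P x) B ∂(μ'.withDensity (G k)) = ∫⁻ x, G k x * (P x) B ∂μ' := by
          rw [lintegral_withDensity_eq_lintegral_mul μ' hg (Kernel.measurable_coe P hB)]
          rfl
        rw [h1, rev_density_step hrev hg hB]
        rfl
      -- mass
      have hMass' : ∫⁻ x, G (k+1) x ∂μ' = 1 := by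
        calc ∫⁻ x, G (k+1) x ∂μ' = ∫⁻ x, ∫⁻ y, G k y ∂P x ∂μ' := rfl
          _ = ∫⁻ x, G k x ∂μ' := rev_invariant hrev hg
          _ = 1 := hMass
      -- contraction
      have hgfinae : ∀ᵐ x ∂μ', G k x < ⊤ := ae_lt_top hg (hMass ▸ ENNReal.one_ne_top)
      have hkmem : MemLp (fun x => (G k x).toReal) 2 μ' := memL2_toReal hg hFin
      have hhmem : MemLp (fun x => (G k x).toReal - 1) 2 μ' := hkmem.sub (memLp_const 1)
      have hmean : ∫ x, ((G k x).toReal - 1) ∂μ' = 0 := by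
        rw [integral_sub (hkmem.integrable one_le_two) (integrable_const 1),
          integral_toReal hg.aemeasurable hgfinae, hMass]
        simp
      have hcon := hcontract _ hhmem hmean
      have hsqfinae : ∀ᵐ x ∂μ', ∫⁻ y, (G k y) ^ 2 ∂P x ≠ ⊤ := by
        have h1 : ∫⁻ x, ∫⁻ y, (G k y) ^ 2 ∂P x ∂μ' ≠ ⊤ := by
          rw [rev_invariant hrev (hg.pow_const 2)]; exact hFin
        exact (ae_lt_top (Measurable.lintegral_kernel (hg.pow_const 2)) h1).mono
          fun x hx => hx.ne
      have haeeq : ∀ᵐ x ∂μ',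
          ∫ y, ((G k y).toReal - 1) ∂P x = (G (k+1) x).toReal - 1 := by
        refine hsqfinae.mono fun x hx => ?_
        have hgfinP : ∀ᵐ y ∂P x, G k y < ⊤ :=
          (ae_lt_top (hg.pow_const 2) hx).mono fun y hy =>
            lt_top_iff_ne_top.2 fun hc => by rw [hc, ENNReal.top_pow (by norm_num)] at hy; exact absurd hy (lt_irrefl _)
        have hmem2 : MemLp (fun y => (G k y).toReal) 2 (P x) := memL2_toReal hg hx
        rw [integral_sub (hmem2.integrable one_le_two) (integrable_const 1),
          integral_toReal hg.aemeasurable hgfinP, hGsucc x]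
        simp
      have hLHSeq : ∫ x, (∫ y, ((G k y).toReal - 1) ∂P x) ^ 2 ∂μ'
          = ∫ x, ((G (k+1) x).toReal - 1) ^ 2 ∂μ' :=
        integral_congr_ae (haeeq.mono fun x hx => by dsimp only; rw [hx])
      rw [hLHSeq] at hcon
      refine ⟨hEq', hfin', hMass', ?_⟩
      calc Real.sqrt (∫ x, ((G (k+1) x).toReal - 1) ^ 2 ∂μ')
          ≤ (1 - Δ) * Real.sqrt (∫ x, ((G k x).toReal - 1) ^ 2 ∂μ') := hcon
        _ ≤ (1 - Δ) * ((1 - Δ) ^ k * A) :=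
            mul_le_mul_of_nonneg_left hContr (by linarith)
        _ = (1 - Δ) ^ (k+1) * A := by ring
  -- assemble
  obtain ⟨hEq, hFin, hMass, hContr⟩ := key τ
  have hτfin : ∀ᵐ x ∂μ', G τ x < ⊤ := ae_lt_top (hGm τ) (hMass ▸ ENNReal.one_ne_top)
  have hmem : MemLp (fun x => (G τ x).toReal) 2 μ' := memL2_toReal (hGm τ) hFin
  have hhmem : MemLp (fun x => (G τ x).toReal - 1) 2 μ' := hmem.sub (memLp_const 1)
  have hintabs : Integrable (fun x => |(G τ x).toReal - 1|) μ' :=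
    (hhmem.integrable one_le_two).abs
  have step1 : tvDist (kernelIter P τ μ) μ' ≤ ∫ x, |(G τ x).toReal - 1| ∂μ' := by
    refine tvDist_le fun B hB => ?_
    have h1 : (kernelIter P τ μ) B = ∫⁻ x in B, G τ x ∂μ' := by
      rw [hEq, withDensity_apply _ hB]
    have h2 : ((kernelIter P τ μ) B).toReal = ∫ x in B, (G τ x).toReal ∂μ' := by
      rw [h1, ← integral_toReal (hGm τ).aemeasurable (ae_restrict_of_ae hτfin)]
    have h3 : (μ' B).toReal = ∫ x in B, (1:ℝ) ∂μ' := by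
      rw [setIntegral_const]; simp; rfl
    rw [h2, h3, ← integral_sub ((hmem.integrable one_le_two).restrict)
      ((integrable_const 1).restrict)]
    calc |∫ x in B, ((G τ x).toReal - 1) ∂μ'|
        ≤ ∫ x in B, |(G τ x).toReal - 1| ∂μ' := by simpa using norm_integral_le_integral_norm (fun x => (G τ x).toReal - 1) (μ := μ'.restrict B)
      _ ≤ ∫ x, |(G τ x).toReal - 1| ∂μ' :=
          integral_mono_measure Measure.restrict_le_self
            (Filter.Eventually.of_forall fun x => abs_nonneg _) hintabs
  have step2 : ∫ x, |(G τ x).toReal - 1| ∂μ'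
      ≤ Real.sqrt (∫ x, ((G τ x).toReal - 1) ^ 2 ∂μ') := integral_abs_le_sqrt_sq hhmem
  -- A ≤ α
  have hmass0 : ∫ x, (G0 x).toReal ∂μ' = 1 := by
    rw [integral_toReal hG0m.aemeasurable hG0fin, Measure.lintegral_rnDeriv hacc]
    simp
  have hstep3 : A ≤ Real.sqrt (∫ x, ((G0 x).toReal) ^ 2 ∂μ') := by
    refine Real.sqrt_le_sqrt ?_
    have h1 : Integrable (fun x => ((G0 x).toReal) ^ 2) μ' := hα.integrable_sq
    have h2 : Integrable (fun x => (G0 x).toReal) μ' := hα.integrable one_le_two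
    have h3 : ∫ x, ((G0 x).toReal - 1) ^ 2 ∂μ'
        = ∫ x, (((G0 x).toReal) ^ 2 - 2 * (G0 x).toReal + 1) ∂μ' := by
      congr 1; ext x; ring
    have hsub : Integrable (fun x => ((G0 x).toReal) ^ 2 - 2 * (G0 x).toReal) μ' :=
      h1.sub (h2.const_mul 2)
    have hmul : Integrable (fun x => 2 * (G0 x).toReal) μ' := h2.const_mul 2
    rw [h3, integral_add hsub (integrable_const 1),
      integral_sub h1 hmul, integral_const_mul, hmass0]
    simp
    linarith
  calc tvDist (kernelIter P τ μ) μ'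
      ≤ ∫ x, |(G τ x).toReal - 1| ∂μ' := step1
    _ ≤ Real.sqrt (∫ x, ((G τ x).toReal - 1) ^ 2 ∂μ') := step2
    _ ≤ (1 - Δ) ^ τ * A := hContr
    _ ≤ (1 - Δ) ^ τ * Real.sqrt (∫ x, ((G0 x).toReal) ^ 2 ∂μ') :=
        mul_le_mul_of_nonneg_left hstep3 (pow_nonneg (by linarith) τ)


/-- if `μ ≪ μ'` with `α = ‖dμ/dμ'‖_{L²(μ')} < ∞`, `P` is a Markov kernel
reversible w.r.t. `μ'` contracting mean-zero functions in `L²(μ')` by `1 − Δ`, `ε > 0`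
and `τ ≥ (1/Δ)·log(α/ε)`, then for every probability measure `σ` on `K`,
`d_TV(σP^τ, μ') ≤ d_TV(σ, μ) + ε`. -/
theorem tv_tracking
    {d : ℕ} (K : Set (EuclideanSpace ℝ (Fin d)))
    (hKcomp : IsCompact K) (hKconv : Convex ℝ K) (hKint : (interior K).Nonempty)
    (μ μ' : Measure (EuclideanSpace ℝ (Fin d)))
    [IsProbabilityMeasure μ] [IsProbabilityMeasure μ']
    (hμK : μ Kᶜ = 0) (hμ'K : μ' Kᶜ = 0)
    (hacc : μ ≪ μ')
    (hα : MemLp (fun x => (μ.rnDeriv μ' x).toReal) 2 μ')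
    (P : Kernel (EuclideanSpace ℝ (Fin d)) (EuclideanSpace ℝ (Fin d)))
    [IsMarkovKernel P]
    (hPsupp : ∀ x ∈ K, (P x) Kᶜ = 0)
    (hrev : (μ' ⊗ₘ P).map Prod.swap = μ' ⊗ₘ P)
    (Δ : ℝ) (hΔ0 : 0 < Δ) (hΔ1 : Δ < 1)
    (hcontract : ∀ f : EuclideanSpace ℝ (Fin d) → ℝ, MemLp f 2 μ' →
      (∫ x, f x ∂μ') = 0 →
      Real.sqrt (∫ x, (∫ y, f y ∂(P x)) ^ 2 ∂μ') ≤
        (1 - Δ) * Real.sqrt (∫ x, (f x) ^ 2 ∂μ'))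
    (ε : ℝ) (hε : 0 < ε) (τ : ℕ)
    (hτ : (1 / Δ) *
        Real.log (Real.sqrt (∫ x, ((μ.rnDeriv μ' x).toReal) ^ 2 ∂μ') / ε) ≤ (τ : ℝ))
    (σ : Measure (EuclideanSpace ℝ (Fin d))) [IsProbabilityMeasure σ] (hσK : σ Kᶜ = 0) :
    tvDist (kernelIter P τ σ) μ' ≤ tvDist σ μ + ε := by
  have htri := tvDist_triangle (kernelIter P τ σ) (kernelIter P τ μ) μ'
  have hcontr2 := tvDist_kernelIter_le P τ σ μ
  have hmain := tvDist_iter_mu_le hacc hα hrev hΔ0 hΔ1 hcontract τ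
  set a : ℝ := Real.sqrt (∫ x, ((μ.rnDeriv μ' x).toReal) ^ 2 ∂μ') with hadef
  have hnum : (1 - Δ) ^ τ * a ≤ ε := by
    have ha0 : 0 ≤ a := Real.sqrt_nonneg _
    rcases eq_or_lt_of_le ha0 with h0 | hpos
    · rw [← h0, mul_zero]; exact le_of_lt hε
    · have h1 : (1 - Δ) ^ τ ≤ Real.exp (-(Δ * τ)) := by
        have h2 : 1 - Δ ≤ Real.exp (-Δ) := by
          have := Real.add_one_le_exp (-Δ); linarith
        calc (1 - Δ) ^ τ ≤ (Real.exp (-Δ)) ^ τ := pow_le_pow_left₀ (by linarith) h2 τ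
          _ = Real.exp (-(Δ * τ)) := by rw [← Real.exp_nat_mul]; ring_nf
      have h3 : Δ * ((1/Δ) * Real.log (a / ε)) ≤ Δ * τ :=
        mul_le_mul_of_nonneg_left hτ hΔ0.le
      rw [← mul_assoc, mul_one_div_cancel hΔ0.ne', one_mul] at h3
      have h4 : Real.exp (-(Δ * τ)) ≤ ε / a := by
        rw [← Real.exp_log (div_pos hε hpos)]
        apply Real.exp_le_exp.2
        have h5 : Real.log (a / ε) = - Real.log (ε / a) := by
          rw [← Real.log_inv]; congr 1; rw [inv_div]
        linarith
      calc (1 - Δ) ^ τ * a ≤ (ε / a) * a :=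
            mul_le_mul_of_nonneg_right (h1.trans h4) ha0
        _ = ε := div_mul_cancel₀ ε (ne_of_gt hpos)
  calc tvDist (kernelIter P τ σ) μ'
      ≤ tvDist (kernelIter P τ σ) (kernelIter P τ μ) + tvDist (kernelIter P τ μ) μ' := htri
    _ ≤ tvDist σ μ + ε := add_le_add hcontr2 (hmain.trans hnum)
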